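/- For the all-ones radius matrix Δ = eeᵀ and nonsingular A, a nearest singular matrix to A in the maximum norm has the form A − d(A)·yzᵀ for some sign vectors y, z ∈ {±1}ⁿ; that is, there exist y, z ∈ {±1}ⁿ such that A − d(A)·yzᵀ is singular, where d(A) = d(A, eeᵀ). -/
import Mathlib


open Matrix
open scoped ENNReal NNReal

noncomputable def regRad {n : ℕ} (A Δ : Matrix (Fin n) (Fin n) ℝ) : ℝ≥0∞ :=
  ⨅ δ ∈ {δ : ℝ≥0 | ∃ M : Matrix (Fin n) (Fin n) ℝ,
      (∀ i j, |M i j - A i j| ≤ (δ : ℝ) * Δ i j) ∧ M.det = 0},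
    (δ : ℝ≥0∞)

theorem nearest_singular_sign_form {n : ℕ} (A : Matrix (Fin n) (Fin n) ℝ)
    (hA : A.det ≠ 0)
    (hfin : regRad A (Matrix.of fun _ _ => (1 : ℝ)) ≠ ⊤) :
    ∃ y z : Fin n → ℝ, (∀ i, y i = 1 ∨ y i = -1) ∧ (∀ i, z i = 1 ∨ z i = -1) ∧
      (A - (regRad A (Matrix.of fun _ _ => (1 : ℝ))).toReal • Matrix.vecMulVec y z).det
        = 0 := by
  classical
  set Δ : Matrix (Fin n) (Fin n) ℝ := Matrix.of fun _ _ => (1 : ℝ) with hΔ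
  set S : Set ℝ≥0 := {δ : ℝ≥0 | ∃ M : Matrix (Fin n) (Fin n) ℝ,
      (∀ i j, |M i j - A i j| ≤ (δ : ℝ) * Δ i j) ∧ M.det = 0} with hSdef
  have hreg : regRad A Δ = ⨅ δ ∈ S, (δ : ℝ≥0∞) := rfl
  set d : ℝ := (regRad A Δ).toReal with hd
  have hd0 : 0 ≤ d := ENNReal.toReal_nonneg
  -- membership gives lower bound
  have hmem : ∀ r : ℝ, 0 ≤ r →
      (∃ M : Matrix (Fin n) (Fin n) ℝ, M.det = 0 ∧ ∀ i j, |M i j - A i j| ≤ r) → d ≤ r := by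
    rintro r hr ⟨M, hM0, hMb⟩
    have hrS : r.toNNReal ∈ S := by
      refine ⟨M, fun i j => ?_, hM0⟩
      simpa [hΔ, Real.coe_toNNReal r hr] using hMb i j
    have h1 : regRad A Δ ≤ (r.toNNReal : ℝ≥0∞) := by
      rw [hreg]; exact iInf₂_le r.toNNReal hrS
    calc d ≤ ((r.toNNReal : ℝ≥0∞)).toReal := ENNReal.toReal_mono (by simp) h1
      _ = r := by simp [Real.coe_toNNReal r hr]
  -- near-optimal singular matrices
  have happrox : ∀ ε : ℝ, 0 < ε →
      ∃ M : Matrix (Fin n) (Fin n) ℝ, M.det = 0 ∧ ∀ i j, |M i j - A i j| ≤ d + ε := by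
    intro ε hε
    have hlt : regRad A Δ < regRad A Δ + ENNReal.ofReal ε := by
      refine ENNReal.lt_add_right hfin ?_
      simp [ENNReal.ofReal_eq_zero, not_le, hε]
    rw [hreg] at hlt
    obtain ⟨δ, hδ⟩ := iInf_lt_iff.mp hlt
    obtain ⟨hδS, hδlt⟩ := iInf_lt_iff.mp hδ
    rw [← hreg] at hδlt
    obtain ⟨M, hMb, hM0⟩ := hδS
    refine ⟨M, hM0, fun i j => ?_⟩
    have hδle : (δ : ℝ) ≤ d + ε := by
      have := ENNReal.toReal_mono (by simp [hfin]) hδlt.le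
      rwa [ENNReal.coe_toReal, ENNReal.toReal_add hfin (by simp),
        ENNReal.toReal_ofReal hε.le] at this
    calc |M i j - A i j| ≤ (δ : ℝ) * Δ i j := hMb i j
      _ = (δ : ℝ) := by simp [hΔ]
      _ ≤ d + ε := hδle
  -- attainment by compactness
  have hK : ∃ M : Matrix (Fin n) (Fin n) ℝ, M.det = 0 ∧ ∀ i j, |M i j - A i j| ≤ d := by
    set K : ℕ → Set (Matrix (Fin n) (Fin n) ℝ) := fun k =>
      {M | M.det = 0 ∧ ∀ i j, |M i j - A i j| ≤ d + 1 / (k + 1)} with hKdef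
    have hpos : ∀ k : ℕ, (0:ℝ) < 1 / (k + 1) := by
      intro k; positivity
    have hclosed : ∀ k, IsClosed (K k) := by
      intro k
      have h1 : IsClosed {M : Matrix (Fin n) (Fin n) ℝ | M.det = 0} :=
        isClosed_eq (Continuous.matrix_det continuous_id) continuous_const
      have h2 : IsClosed {M : Matrix (Fin n) (Fin n) ℝ |
          ∀ i j, |M i j - A i j| ≤ d + 1 / (k + 1)} := by
        have heq : {M : Matrix (Fin n) (Fin n) ℝ | ∀ i j, |M i j - A i j| ≤ d + 1 / (k + 1)} =
            ⋂ i, ⋂ j, {M : Matrix (Fin n) (Fin n) ℝ | |M i j - A i j| ≤ d + 1 / (k + 1)} := by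
          ext M; simp
        rw [heq]
        refine isClosed_iInter fun i => isClosed_iInter fun j => ?_
        exact isClosed_le (((continuous_id.matrix_elem i j).sub continuous_const).abs)
          continuous_const
      have : K k = {M : Matrix (Fin n) (Fin n) ℝ | M.det = 0} ∩
          {M : Matrix (Fin n) (Fin n) ℝ | ∀ i j, |M i j - A i j| ≤ d + 1 / (k + 1)} := by
        ext M; simp [hKdef, Set.mem_setOf_eq, Set.mem_inter_iff]
      rw [this]; exact h1.inter h2
    have hT : IsCompact (Set.pi (Set.univ : Set (Fin n)) fun i =>
        Set.pi (Set.univ : Set (Fin n)) fun j =>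
          Set.Icc (A i j - (d + 1)) (A i j + (d + 1))) :=
      isCompact_univ_pi fun i => isCompact_univ_pi fun j => isCompact_Icc
    have hsub : K 0 ⊆ Set.pi (Set.univ : Set (Fin n)) fun i =>
        Set.pi (Set.univ : Set (Fin n)) fun j =>
          Set.Icc (A i j - (d + 1)) (A i j + (d + 1)) := by
      rintro M ⟨_, hMb⟩
      intro i _
      intro j _
      have := hMb i j
      rw [abs_le] at this
      have h1 : (1:ℝ) / ((0:ℕ) + 1) = 1 := by norm_num
      rw [h1] at this
      constructor <;> [linarith [this.1]; linarith [this.2]]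
    have hcompact : IsCompact (K 0) := hT.of_isClosed_subset (hclosed 0) hsub
    have hnonempty : ∀ k, (K k).Nonempty := by
      intro k
      obtain ⟨M, hM0, hMb⟩ := happrox (1 / (k + 1)) (hpos k)
      exact ⟨M, hM0, hMb⟩
    have hnested : ∀ k, K (k + 1) ⊆ K k := by
      rintro k M ⟨hM0, hMb⟩
      refine ⟨hM0, fun i j => ?_⟩
      refine (hMb i j).trans ?_
      have : (1:ℝ) / ((k:ℝ) + 1 + 1) ≤ 1 / ((k:ℝ) + 1) := by
        apply one_div_le_one_div_of_le
        · positivity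
        · linarith
      push_cast
      linarith
    obtain ⟨M, hM⟩ := IsCompact.nonempty_iInter_of_sequence_nonempty_isCompact_isClosed
      K hnested hnonempty hcompact hclosed
    simp only [Set.mem_iInter] at hM
    refine ⟨M, (hM 0).1, fun i j => ?_⟩
    refine le_of_forall_pos_le_add fun ε hε => ?_
    obtain ⟨k, hk⟩ := exists_nat_one_div_lt hε
    calc |M i j - A i j| ≤ d + 1 / (k + 1) := (hM k).2 i j
      _ ≤ d + ε := by push_cast at hk ⊢; linarith
  obtain ⟨M, hMdet, hMb⟩ := hK
  -- d > 0
  have hdpos : 0 < d := by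
    rcases lt_or_eq_of_le hd0 with h | h
    · exact h
    · exfalso; apply hA
      have hMA : M = A := by
        ext i j
        have h1 := hMb i j
        rw [← h] at h1
        have := abs_nonpos_iff.mp h1
        linarith [sub_eq_zero.mp this]
      rw [← hMA]; exact hMdet
  -- kernel vector
  obtain ⟨x, hx0, hxM⟩ := (Matrix.exists_mulVec_eq_zero_iff).mpr hMdet
  obtain ⟨j₀, hj₀⟩ := Function.ne_iff.mp hx0
  set s : ℝ := ∑ j, |x j| with hsdef
  have hs : 0 < s :=
    Finset.sum_pos' (fun j _ => abs_nonneg _)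
      ⟨j₀, Finset.mem_univ _, abs_pos.mpr (by simpa using hj₀)⟩
  set z : Fin n → ℝ := fun j => if 0 ≤ x j then 1 else -1 with hzdef
  have hz : ∀ j, z j * x j = |x j| := by
    intro j
    simp only [hzdef]
    split_ifs with h
    · rw [abs_of_nonneg h]; ring
    · rw [abs_of_neg (lt_of_not_ge h)]; ring
  have hzsign : ∀ j, z j = 1 ∨ z j = -1 := by
    intro j; simp only [hzdef]; split_ifs <;> simp
  have hzx : z ⬝ᵥ x = s := by
    simp only [dotProduct, hsdef]
    exact Finset.sum_congr rfl fun j _ => hz j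
  -- bound on A *ᵥ x
  have hAx : ∀ i, |(A *ᵥ x) i| ≤ d * s := by
    intro i
    have h0 : (M *ᵥ x) i = 0 := by rw [hxM]; rfl
    have h1 : (A *ᵥ x) i = ∑ j, (A i j - M i j) * x j := by
      simp only [mulVec, dotProduct] at h0 ⊢
      rw [Finset.sum_congr rfl (fun j _ => sub_mul (A i j) (M i j) (x j)),
        Finset.sum_sub_distrib, h0, sub_zero]
    rw [h1]
    calc |∑ j, (A i j - M i j) * x j| ≤ ∑ j, |(A i j - M i j) * x j| :=
          Finset.abs_sum_le_sum_abs _ _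
      _ ≤ ∑ j, d * |x j| := by
          refine Finset.sum_le_sum fun j _ => ?_
          rw [abs_mul]
          refine mul_le_mul_of_nonneg_right ?_ (abs_nonneg _)
          rw [abs_sub_comm]; exact hMb i j
      _ = d * s := by rw [hsdef, Finset.mul_sum]
  have hAdet : IsUnit A.det := isUnit_iff_ne_zero.mpr hA
  have hBA : A⁻¹ * A = 1 := Matrix.nonsing_inv_mul A hAdet
  have hAB : A * A⁻¹ = 1 := Matrix.mul_nonsing_inv A hAdet
  set p : Fin n → ℝ := z ᵥ* A⁻¹ with hpdef
  have hps : p ⬝ᵥ (A *ᵥ x) = s := by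
    rw [hpdef, ← Matrix.dotProduct_mulVec, Matrix.mulVec_mulVec, hBA, Matrix.one_mulVec, hzx]
  set q : ℝ := ∑ i, |p i| with hqdef
  have hq1 : 1 ≤ d * q := by
    have h2 : s ≤ q * (d * s) := by
      calc s = p ⬝ᵥ (A *ᵥ x) := hps.symm
        _ = ∑ i, p i * (A *ᵥ x) i := rfl
        _ ≤ ∑ i, |p i * (A *ᵥ x) i| := Finset.sum_le_sum fun i _ => le_abs_self _
        _ = ∑ i, |p i| * |(A *ᵥ x) i| := by
            exact Finset.sum_congr rfl fun i _ => abs_mul _ _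
        _ ≤ ∑ i, |p i| * (d * s) := Finset.sum_le_sum fun i _ =>
            mul_le_mul_of_nonneg_left (hAx i) (abs_nonneg _)
        _ = q * (d * s) := by rw [hqdef, Finset.sum_mul]
    nlinarith
  have hq0 : 0 < q := by nlinarith
  set y : Fin n → ℝ := fun i => if 0 ≤ p i then 1 else -1 with hydef
  have hysign : ∀ i, y i = 1 ∨ y i = -1 := by
    intro i; simp only [hydef]; split_ifs <;> simp
  have hy : ∀ i, p i * y i = |p i| := by
    intro i
    simp only [hydef]
    split_ifs with h
    · rw [abs_of_nonneg h]; ring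
    · rw [abs_of_neg (lt_of_not_ge h)]; ring
  have hpy : p ⬝ᵥ y = q := by
    simp only [dotProduct, hqdef]
    exact Finset.sum_congr rfl fun i _ => hy i
  set w : Fin n → ℝ := A⁻¹ *ᵥ y with hwdef
  have hAw : A *ᵥ w = y := by
    rw [hwdef, Matrix.mulVec_mulVec, hAB, Matrix.one_mulVec]
  have hzw : z ⬝ᵥ w = q := by
    rw [hwdef, Matrix.dotProduct_mulVec, ← hpdef, hpy]
  have hwne : w ≠ 0 := by
    intro h
    have : y = 0 := by rw [← hAw, h, Matrix.mulVec_zero]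
    have := congrFun this j₀
    rcases hysign j₀ with hy1 | hy1 <;> rw [hy1] at this <;> norm_num at this
  set r : ℝ := q⁻¹ with hrdef
  have hrq : r * q = 1 := inv_mul_cancel₀ (ne_of_gt hq0)
  have hsing : (A - r • Matrix.vecMulVec y z).det = 0 := by
    rw [← Matrix.exists_mulVec_eq_zero_iff]
    refine ⟨w, hwne, ?_⟩
    have hvm : Matrix.vecMulVec y z *ᵥ w = (z ⬝ᵥ w) • y := by
      funext i
      simp only [Matrix.mulVec, Matrix.vecMulVec_apply, dotProduct, Pi.smul_apply,
        smul_eq_mul, Finset.mul_sum]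
      rw [Finset.sum_congr rfl fun j _ => (mul_assoc (y i) (z j) (w j))]
      rw [← Finset.mul_sum]
      ring
    rw [Matrix.sub_mulVec, hAw, Matrix.smul_mulVec, hvm, hzw, smul_smul, hrq, one_smul,
      sub_self]
  have hrd : r = d := by
    have hr0 : 0 < r := by rw [hrdef]; positivity
    have hle1 : d ≤ r := by
      refine hmem r hr0.le ⟨A - r • Matrix.vecMulVec y z, hsing, fun i j => ?_⟩
      have : (A - r • Matrix.vecMulVec y z) i j - A i j = -(r * (y i * z j)) := by
        simp [Matrix.sub_apply, Matrix.smul_apply, Matrix.vecMulVec_apply]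
      rw [this, abs_neg, abs_mul, abs_mul]
      rcases hysign i with h1 | h1 <;> rcases hzsign j with h2 | h2 <;>
        rw [h1, h2] <;> simp [abs_of_pos hr0]
    have hle2 : r ≤ d := by
      rw [hrdef]
      rw [inv_le_iff_one_le_mul₀' hq0]
      linarith
    linarith
  exact ⟨y, z, hysign, hzsign, by rw [← hrd]; exact hsing⟩
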